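/- With α = (1 + k/n)/2, β = 1/2, γ = 1 − k/n = 2(1−α), δ = 1, n = |T| > k ≥ 0, suppose ν ≥ (2+β)/(1−α), ν_0 = ν, ν_{i+1} ≤ α ν_i + β, and s_i = γ ν_{i−1} − 1. Let j be the least integer with α^j (ν − β/(1−α)) ≤ 2/(1−α). Then ν_j ≤ 5n/(n−k) and s_1 + ... + s_j ≤ 2(ν − n/(n−k)). -/

import Mathlib

open Finset

/-- With `α = (1+k/n)/2`, `β = 1/2`, `γ = 2(1-α)`, `δ = 1`, `0 ≤ k < n`,
`ν ≥ (2+β)/(1-α)`, `ν₀ = ν`, `ν_{i+1} ≤ α·ν_i + β`, `s_i = γ·ν_{i-1} - 1`, and `j`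
the least integer with `α^j·(ν - β/(1-α)) ≤ 2/(1-α)`, one has
`ν_j ≤ 5n/(n-k)` and `s_1 + ... + s_j ≤ 2·(ν - n/(n-k))`. -/
theorem stmt_11 (n k : ℝ) (hk0 : 0 ≤ k) (hkn : k < n)
    (v : ℕ → ℝ) (ν : ℝ) (h0 : v 0 = ν)
    (hrec : ∀ i, v (i + 1) ≤ ((1 + k / n) / 2) * v i + 1 / 2)
    (hν : (2 + 1 / 2) / (1 - (1 + k / n) / 2) ≤ ν)
    (j : ℕ)
    (hj : ((1 + k / n) / 2) ^ j * (ν - (1 / 2) / (1 - (1 + k / n) / 2))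
        ≤ 2 / (1 - (1 + k / n) / 2))
    (hjmin : ∀ i : ℕ, i < j →
      ¬ (((1 + k / n) / 2) ^ i * (ν - (1 / 2) / (1 - (1 + k / n) / 2))
        ≤ 2 / (1 - (1 + k / n) / 2))) :
    v j ≤ 5 * n / (n - k) ∧
    ∑ i ∈ Finset.Icc 1 j, (2 * (1 - (1 + k / n) / 2) * v (i - 1) - 1)
      ≤ 2 * (ν - n / (n - k)) := by
  have hn : 0 < n := lt_of_le_of_lt hk0 hkn
  set a : ℝ := (1 + k / n) / 2 with ha
  have ha0 : 0 ≤ a := by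
    have : 0 ≤ k / n := div_nonneg hk0 hn.le
    rw [ha]; linarith
  have ha1 : a < 1 := by
    have : k / n < 1 := (div_lt_one hn).mpr hkn
    rw [ha]; linarith
  have h1a : 0 < 1 - a := by linarith
  have hnk : 0 < n - k := by linarith
  have hne : n - k ≠ 0 := hnk.ne'
  set c : ℝ := (1 / 2) / (1 - a) with hcdef
  have hc : a * c + 1 / 2 = c := by
    rw [hcdef]; field_simp; ring
  have hcc : 2 * (1 - a) * c = 1 := by
    rw [hcdef]; field_simp
  have key : ∀ i, v i ≤ a ^ i * (ν - c) + c := by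
    intro i
    induction i with
    | zero => simp [h0]
    | succ i ih =>
      calc v (i + 1) ≤ a * v i + 1 / 2 := hrec i
        _ ≤ a * (a ^ i * (ν - c) + c) + 1 / 2 := by nlinarith
        _ = a ^ (i + 1) * (ν - c) + c := by rw [pow_succ]; linear_combination hc
  have hνc : c ≤ ν := by
    have h2 : (2 + 1 / 2) / (1 - a) = 2 / (1 - a) + c := by
      rw [hcdef]; field_simp
    have : 0 < 2 / (1 - a) := by positivity
    rw [h2] at hν; linarith
  have h1aeq : 1 - a = (n - k) / (2 * n) := by
    rw [ha]; field_simp; ring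
  have hcn : c = n / (n - k) := by
    rw [hcdef, h1aeq, div_div_eq_mul_div]; ring_nf
  have h4 : 2 / (1 - a) = 4 * n / (n - k) := by
    rw [h1aeq, div_div_eq_mul_div]; ring_nf
  constructor
  · have h5 : 2 / (1 - a) + c = 5 * n / (n - k) := by
      rw [h4, hcn]; ring
    calc v j ≤ a ^ j * (ν - c) + c := key j
      _ ≤ 2 / (1 - a) + c := by linarith [hj]
      _ = 5 * n / (n - k) := h5
  · have term : ∀ i ∈ Finset.Icc 1 j,
        2 * (1 - a) * v (i - 1) - 1 ≤ 2 * (1 - a) * (a ^ (i - 1) * (ν - c)) := by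
      intro i _
      have h := key (i - 1)
      nlinarith
    have sumle := Finset.sum_le_sum term
    have hgeo : ∑ i ∈ Finset.Icc 1 j, 2 * (1 - a) * (a ^ (i - 1) * (ν - c))
        = 2 * (1 - a) * (ν - c) * ∑ i ∈ Finset.range j, a ^ i := by
      rw [show Finset.Icc 1 j = Finset.Ico 1 (j + 1) by rw [Finset.Ico_add_one_right_eq_Icc],
        Finset.sum_Ico_eq_sum_range]
      simp only [Nat.add_sub_cancel]
      rw [Finset.mul_sum]
      apply Finset.sum_congr rfl
      intro i _
      simp only [Nat.add_sub_cancel_left]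
      ring
    have hgs : ∑ i ∈ Finset.range j, a ^ i ≤ 1 / (1 - a) := by
      rw [geom_sum_eq (by linarith : a ≠ 1)]
      have hpj : 0 ≤ a ^ j := pow_nonneg ha0 j
      have heq : (a ^ j - 1) / (a - 1) = (1 - a ^ j) / (1 - a) := by
        rw [div_eq_div_iff (by linarith) (by linarith)]; ring
      rw [heq, div_le_div_iff₀ h1a h1a]
      nlinarith
    have hw : 0 ≤ ν - c := by linarith
    calc ∑ i ∈ Finset.Icc 1 j, (2 * (1 - a) * v (i - 1) - 1)
        ≤ 2 * (1 - a) * (ν - c) * ∑ i ∈ Finset.range j, a ^ i := by rw [← hgeo]; exact sumle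
      _ ≤ 2 * (1 - a) * (ν - c) * (1 / (1 - a)) := by
          apply mul_le_mul_of_nonneg_left hgs; positivity
      _ = 2 * (ν - c) := by field_simp
      _ = 2 * (ν - n / (n - k)) := by rw [hcn]
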